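/- Let T be an invertible measure-preserving transformation of a probability space that is κ-mixing for some κ ∈ (0,1): T^{n(i)} → (1−κ)I + κΘ weakly for some n(i) → ∞. Let J : L²(μ) → L²(μ) ⊗ L²(μ) be a Markov (bistochastic) intertwining operator with (T ⊗ T)J = JT, and suppose J maps H (the mean-zero subspace) into H ⊗ H. Then J restricted to H is zero, i.e. J = JΘ. -/

import Mathlib

open MeasureTheory Filter

theorem aux_dense_tendsto {K : Type*} [NormedAddCommGroup K] (s : Set K) (hs : Dense s)
    (φ : ℕ → K → ℝ) (ψ : K → ℝ) (C : ℝ) (hC : 0 < C)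
    (hφ : ∀ i x y, |φ i x - φ i y| ≤ C * ‖x - y‖)
    (hψ : ∀ x y, |ψ x - ψ y| ≤ C * ‖x - y‖)
    (h : ∀ x ∈ s, Tendsto (fun i => φ i x) atTop (nhds (ψ x))) :
    ∀ x, Tendsto (fun i => φ i x) atTop (nhds (ψ x)) := by
  intro x
  rw [Metric.tendsto_atTop]
  intro ε hε
  obtain ⟨y, hys, hxy⟩ := Metric.mem_closure_iff.1 (hs x) (ε / (3 * C)) (by positivity)
  obtain ⟨N, hN⟩ := Metric.tendsto_atTop.1 (h y hys) (ε / 3) (by positivity)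
  refine ⟨N, fun i hi => ?_⟩
  have h1 : |φ i x - φ i y| ≤ C * ‖x - y‖ := hφ i x y
  have h2 : |ψ y - ψ x| ≤ C * ‖y - x‖ := hψ y x
  have hd : ‖x - y‖ < ε / (3 * C) := by rwa [← dist_eq_norm]
  have hd' : ‖y - x‖ < ε / (3 * C) := by rwa [norm_sub_rev]
  have h4 : dist (φ i y) (ψ y) < ε / 3 := hN i hi
  rw [Real.dist_eq] at h4 ⊢
  have e1 : C * ‖x - y‖ < ε / 3 := by
    calc C * ‖x - y‖ < C * (ε / (3 * C)) := mul_lt_mul_of_pos_left hd hC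
    _ = ε / 3 := by field_simp
  have e2 : C * ‖y - x‖ < ε / 3 := by
    calc C * ‖y - x‖ < C * (ε / (3 * C)) := mul_lt_mul_of_pos_left hd' hC
    _ = ε / 3 := by field_simp
  calc |φ i x - ψ x| ≤ |φ i x - φ i y| + |φ i y - ψ y| + |ψ y - ψ x| := by
        nlinarith [abs_sub_le (φ i x) (φ i y) (ψ x), abs_sub_le (φ i y) (ψ y) (ψ x)]
    _ < ε / 3 + ε / 3 + ε / 3 := by
        exact add_lt_add (add_lt_add_of_lt_of_le (lt_of_le_of_lt h1 e1) (le_of_lt h4))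
          (lt_of_le_of_lt h2 e2)
    _ = ε := by ring

set_option maxHeartbeats 2000000 in
theorem stmt13 {X : Type*} [MeasurableSpace X] (μ : Measure X) [IsProbabilityMeasure μ]
    {K : Type*} [NormedAddCommGroup K] [InnerProductSpace ℝ K] [CompleteSpace K]
    (tp : Lp ℝ 2 μ →ₗ[ℝ] Lp ℝ 2 μ →ₗ[ℝ] K)
    (htp_inner : ∀ u v u' v' : Lp ℝ 2 μ,
      (inner ℝ (tp u v) (tp u' v') : ℝ) = (inner ℝ u u' : ℝ) * (inner ℝ v v' : ℝ))
    (htp_dense : Dense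
      ((Submodule.span ℝ (Set.range fun p : Lp ℝ 2 μ × Lp ℝ 2 μ => tp p.1 p.2) :
        Submodule ℝ K) : Set K))
    (T : Lp ℝ 2 μ ≃ₗᵢ[ℝ] Lp ℝ 2 μ)
    (κ : ℝ) (hκ0 : 0 < κ) (hκ1 : κ < 1)
    (n : ℕ → ℕ) (hn : Tendsto n atTop atTop)
    (hκmix : ∀ f g : Lp ℝ 2 μ,
      Tendsto (fun i => (inner ℝ ((T ^ n i) f) g : ℝ)) atTop
        (nhds (inner ℝ ((1 - κ) • f + κ • ((∫ x, f x ∂μ) • (Lp.const 2 μ (1 : ℝ)))) g)))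
    (T2 : K ≃ₗᵢ[ℝ] K)
    (hT2 : ∀ u v : Lp ℝ 2 μ, T2 (tp u v) = tp (T u) (T v))
    (J : Lp ℝ 2 μ →L[ℝ] K)
    (hJ1 : J (Lp.const 2 μ (1 : ℝ)) = tp (Lp.const 2 μ (1 : ℝ)) (Lp.const 2 μ (1 : ℝ)))
    (hJadj1 : ∀ f : Lp ℝ 2 μ,
      (inner ℝ (J f) (tp (Lp.const 2 μ (1 : ℝ)) (Lp.const 2 μ (1 : ℝ))) : ℝ)
        = inner ℝ f (Lp.const 2 μ (1 : ℝ)))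
    (hJT : ∀ f : Lp ℝ 2 μ, T2 (J f) = J (T f))
    (hJH : ∀ f : Lp ℝ 2 μ, ∫ x, f x ∂μ = 0 → ∀ v : Lp ℝ 2 μ,
      (inner ℝ (J f) (tp (Lp.const 2 μ (1 : ℝ)) v) : ℝ) = 0 ∧
      (inner ℝ (J f) (tp v (Lp.const 2 μ (1 : ℝ))) : ℝ) = 0) :
    ∀ f : Lp ℝ 2 μ, ∫ x, f x ∂μ = 0 → J f = 0 := by
  intro f hf
  set c1 : Lp ℝ 2 μ := Lp.const 2 μ (1 : ℝ) with hc1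
  -- inner ℝ with the constant 1 is the integral
  have hinner1 : ∀ g : Lp ℝ 2 μ, (inner ℝ g c1 : ℝ) = ∫ x, g x ∂μ := by
    intro g
    rw [hc1, L2.inner_def]
    refine integral_congr_ae ?_
    filter_upwards [Lp.coeFn_const 2 μ (1:ℝ)] with x hx
    simp [hx, RCLike.inner_apply]
  have hinner1' : ∀ g : Lp ℝ 2 μ, (inner ℝ c1 g : ℝ) = ∫ x, g x ∂μ := by
    intro g; rw [real_inner_comm]; exact hinner1 g
  set P : Lp ℝ 2 μ → Lp ℝ 2 μ :=
    fun g => (1 - κ) • g + κ • ((∫ x, g x ∂μ) • c1) with hP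
  have hPadj : ∀ u u' : Lp ℝ 2 μ, (inner ℝ (P u) u' : ℝ) = inner ℝ u (P u') := by
    intro u u'
    simp only [hP, inner_add_left, inner_add_right, real_inner_smul_left,
      real_inner_smul_right, hinner1, hinner1']
    ring
  -- iterates
  have hT2pow : ∀ m : ℕ, ∀ u v : Lp ℝ 2 μ, (T2 ^ m) (tp u v) = tp ((T ^ m) u) ((T ^ m) v) := by
    intro m
    induction m with
    | zero => intro u v; simp
    | succ m ih =>
      intro u v
      have h1 : (T2 ^ (m+1)) (tp u v) = T2 ((T2 ^ m) (tp u v)) := by rw [pow_succ']; rfl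
      have h2 : ((T ^ (m+1)) u) = T ((T ^ m) u) := by rw [pow_succ']; rfl
      have h3 : ((T ^ (m+1)) v) = T ((T ^ m) v) := by rw [pow_succ']; rfl
      rw [h1, ih u v, hT2, h2, h3]
  have hJTpow : ∀ m : ℕ, ∀ g : Lp ℝ 2 μ, (T2 ^ m) (J g) = J ((T ^ m) g) := by
    intro m
    induction m with
    | zero => intro g; simp
    | succ m ih =>
      intro g
      have h1 : (T2 ^ (m+1)) (J g) = T2 ((T2 ^ m) (J g)) := by rw [pow_succ']; rfl
      have h2 : ((T ^ (m+1)) g) = T ((T ^ m) g) := by rw [pow_succ']; rfl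
      rw [h1, ih g, hJT, h2]
  -- the main computation: J f is orthogonal to all elementary tensors
  have key : ∀ u' v' : Lp ℝ 2 μ, (inner ℝ (J f) (tp u' v') : ℝ) = 0 := by
    intro u' v'
    set w : K := tp u' v' with hw
    set W : K := tp (P u') (P v') with hW
    set A : ℝ := inner ℝ (J f) w with hA
    -- weak limit of T2^{n i} tested against w
    have hlim : ∀ x : K,
        Tendsto (fun i => (inner ℝ ((T2 ^ n i) x) w : ℝ)) atTop (nhds (inner ℝ x W : ℝ)) := by
      refine aux_dense_tendsto _ htp_dense _ _ (‖w‖ + ‖W‖ + 1) (by positivity) ?_ ?_ ?_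
      · intro i x y
        have : (inner ℝ ((T2 ^ n i) x) w : ℝ) - inner ℝ ((T2 ^ n i) y) w
            = inner ℝ ((T2 ^ n i) (x - y)) w := by
          rw [map_sub, inner_sub_left]
        rw [this]
        calc |(inner ℝ ((T2 ^ n i) (x - y)) w : ℝ)| ≤ ‖(T2 ^ n i) (x - y)‖ * ‖w‖ :=
              abs_real_inner_le_norm _ _
          _ = ‖x - y‖ * ‖w‖ := by rw [LinearIsometryEquiv.norm_map]
          _ ≤ (‖w‖ + ‖W‖ + 1) * ‖x - y‖ := by nlinarith [norm_nonneg (x - y), norm_nonneg W]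
      · intro x y
        have : (inner ℝ x W : ℝ) - inner ℝ y W = inner ℝ (x - y) W := by rw [inner_sub_left]
        rw [this]
        calc |(inner ℝ (x - y) W : ℝ)| ≤ ‖x - y‖ * ‖W‖ := abs_real_inner_le_norm _ _
          _ ≤ (‖w‖ + ‖W‖ + 1) * ‖x - y‖ := by nlinarith [norm_nonneg (x - y), norm_nonneg w]
      · intro x hx
        induction hx using Submodule.span_induction with
        | mem x hxm =>
          obtain ⟨⟨u, v⟩, rfl⟩ := hxm
          simp only
          have hrw : ∀ i, (inner ℝ ((T2 ^ n i) (tp u v)) w : ℝ)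
              = (inner ℝ ((T ^ n i) u) u' : ℝ) * (inner ℝ ((T ^ n i) v) v' : ℝ) := by
            intro i; rw [hT2pow, hw, htp_inner]
          have hlim2 : Tendsto
              (fun i => (inner ℝ ((T ^ n i) u) u' : ℝ) * (inner ℝ ((T ^ n i) v) v' : ℝ))
              atTop (nhds ((inner ℝ (P u) u' : ℝ) * (inner ℝ (P v) v' : ℝ))) :=
            (hκmix u u').mul (hκmix v v')
          have : (inner ℝ (tp u v) W : ℝ) = (inner ℝ (P u) u' : ℝ) * (inner ℝ (P v) v' : ℝ) := by
            rw [hW, htp_inner, hPadj u u', hPadj v v']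
          rw [this]
          exact hlim2.congr (fun i => (hrw i).symm)
        | zero => simp [inner_zero_left]
        | add x y _ _ hx hy =>
          have : ∀ i, (inner ℝ ((T2 ^ n i) (x + y)) w : ℝ)
              = inner ℝ ((T2 ^ n i) x) w + inner ℝ ((T2 ^ n i) y) w := by
            intro i; rw [map_add, inner_add_left]
          rw [show (inner ℝ (x + y) W : ℝ) = inner ℝ x W + inner ℝ y W from inner_add_left x y W]
          exact (hx.add hy).congr (fun i => (this i).symm)
        | smul a x _ hx =>
          have : ∀ i, (inner ℝ ((T2 ^ n i) (a • x)) w : ℝ)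
              = a * inner ℝ ((T2 ^ n i) x) w := by
            intro i; rw [_root_.map_smul, real_inner_smul_left]
          rw [show (inner ℝ (a • x) W : ℝ) = a * inner ℝ x W from real_inner_smul_left x W a]
          exact (hx.const_mul a).congr (fun i => (this i).symm)
    -- first evaluation of the limit: (1-κ)^2 * A
    have heq : (inner ℝ (J f) W : ℝ) = (1 - κ) * ((1 - κ) * A) := by
      have hconst : (inner ℝ (J f) (tp c1 c1) : ℝ) = 0 := by
        rw [hJadj1 f, hinner1, hf]
      rw [hW]
      simp only [hP, map_add, _root_.map_smul, LinearMap.add_apply, LinearMap.smul_apply,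
        inner_add_right, real_inner_smul_right]
      rw [(hJH f hf u').2, (hJH f hf v').1, hconst, hA, hw]
      ring
    -- second evaluation of the limit: (1-κ) * A
    have hlim2 : Tendsto (fun i => (inner ℝ ((T2 ^ n i) (J f)) w : ℝ)) atTop
        (nhds ((1 - κ) * A)) := by
      have hrw : ∀ i, (inner ℝ ((T2 ^ n i) (J f)) w : ℝ)
          = inner ℝ ((T ^ n i) f) ((ContinuousLinearMap.adjoint J) w) := by
        intro i
        rw [hJTpow, ← ContinuousLinearMap.adjoint_inner_right]
      have hmf := hκmix f ((ContinuousLinearMap.adjoint J) w)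
      rw [hf] at hmf
      have : (inner ℝ ((1 - κ) • f + κ • ((0:ℝ) • c1)) ((ContinuousLinearMap.adjoint J) w) : ℝ)
          = (1 - κ) * A := by
        simp only [zero_smul, smul_zero, add_zero, real_inner_smul_left]
        rw [ContinuousLinearMap.adjoint_inner_right, hA]
      rw [this] at hmf
      exact hmf.congr (fun i => (hrw i).symm)
    have huniq : (inner ℝ (J f) W : ℝ) = (1 - κ) * A := tendsto_nhds_unique (hlim (J f)) hlim2
    rw [heq] at huniq
    have h1κ : (1 - κ) ≠ 0 := by linarith
    have : (1 - κ) * A = A := by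
      have := mul_left_cancel₀ h1κ huniq
      exact this
    nlinarith
  -- conclude J f = 0 by density
  have hall : ∀ x : K, (inner ℝ (J f) x : ℝ) = 0 := by
    have hzero : Set.EqOn (fun y : K => (inner ℝ (J f) y : ℝ)) (fun _ => 0)
        ((Submodule.span ℝ (Set.range fun p : Lp ℝ 2 μ × Lp ℝ 2 μ => tp p.1 p.2) :
          Submodule ℝ K) : Set K) := by
      intro y hy
      induction hy using Submodule.span_induction with
      | mem y hym => obtain ⟨⟨u, v⟩, rfl⟩ := hym; exact key u v
      | zero => simp
      | add x y _ _ hx hy => simp only [inner_add_right]; simp only at hx hy; rw [hx, hy]; ring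
      | smul a x _ hx => simp only [real_inner_smul_right]; simp only at hx; rw [hx]; ring
    have hcont : Continuous (fun y : K => (inner ℝ (J f) y : ℝ)) := by
      exact Continuous.inner continuous_const continuous_id
    have := hzero.closure hcont continuous_const
    intro x
    have hx : x ∈ closure ((Submodule.span ℝ
        (Set.range fun p : Lp ℝ 2 μ × Lp ℝ 2 μ => tp p.1 p.2) : Submodule ℝ K) : Set K) :=
      htp_dense x
    exact this hx
  have : (inner ℝ (J f) (J f) : ℝ) = 0 := hall (J f)
  exact inner_self_eq_zero.mp this
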